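/- Let M ≥ 1 be an integer and G = {2πk/M : k ∈ ℤ}. Let T ≥ 1 and let l₁ ≤ u₁ < l₂ ≤ u₂ < … < l_T ≤ u_T be elements of G with −π ≤ l₁ and u_T < π, and set F = ⋃_{t=1}^{T}([l_t, u_t] ∩ G) (each block consists of all grid points between l_t and u_t). Let φ_g ∈ [−π, π] be a point at which χ attains its maximum over [−π, π]. Then the maximum of χ over the finite set F is attained as follows: (i) if l_q ≤ φ_g ≤ u_q for some index q, then χ(y) ≤ max(χ(φ_l), χ(φ_u)) for all y ∈ F, where φ_l = ⌊φ_g M/(2π)⌋·(2π/M) and φ_u = ⌈φ_g M/(2π)⌉·(2π/M); (ii) if φ_g ∉ [l₁, u_T], then χ(y) ≤ max(χ(l₁), χ(u_T)) for all y ∈ F; (iii) otherwise, letting r* be the largest index r with u_r < φ_g, one has χ(y) ≤ max(χ(l₁), χ(u_{r*}), χ(l_{r*+1}), χ(u_T)) for all y ∈ F. -/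

import Mathlib

open Set

private lemma expPer (z : ℝ) (k : ℤ) :
    Complex.exp (Complex.I * ((z + 2 * Real.pi * k : ℝ) : ℂ)) =
      Complex.exp (Complex.I * (z : ℂ)) := by
  have h : Complex.I * ((z + 2 * Real.pi * k : ℝ) : ℂ)
      = Complex.I * (z : ℂ) + (k : ℂ) * (2 * Real.pi * Complex.I) := by
    push_cast; ring
  rw [h, Complex.exp_add, Complex.exp_int_mul_two_pi_mul_I, mul_one]

private lemma arcLemma (a c : ℂ) (b d : ℝ) (χ : ℝ → ℝ)
    (hχ : χ = fun y : ℝ => ((a * Complex.exp (Complex.I * (y : ℂ))).re + b) /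
                        ((c * Complex.exp (Complex.I * (y : ℂ))).re + d))
    (hpos : ∀ y : ℝ, 0 < (c * Complex.exp (Complex.I * (y : ℂ))).re + d)
    (φg : ℝ) (hglob : ∀ y : ℝ, χ y ≤ χ φg)
    (s t y : ℝ) (hsy : s ≤ y) (hyt : y ≤ t)
    (hfree : ∀ k : ℤ, φg + 2 * Real.pi * k ∉ Set.Ioo s t) :
    χ y ≤ max (χ s) (χ t) := by
  by_contra hcon
  rw [not_le, max_lt_iff] at hcon
  obtain ⟨hs', ht'⟩ := hcon
  set μ := χ y with hμ
  set num : ℝ → ℝ := fun z => (a * Complex.exp (Complex.I * (z : ℂ))).re + b with hnum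
  set den : ℝ → ℝ := fun z => (c * Complex.exp (Complex.I * (z : ℂ))).re + d with hden
  have hχ' : ∀ z : ℝ, χ z = num z / den z := by intro z; rw [hχ]
  set P : ℝ → ℝ := fun z => num z - μ * den z with hP
  have hPiff : ∀ z : ℝ, (0 ≤ P z ↔ μ ≤ χ z) := by
    intro z
    rw [hχ' z, le_div_iff₀ (hpos z)]
    simp only [hP, hnum, hden]
    constructor <;> intro h <;> linarith
  have hPy : P y = 0 := by
    simp only [hP]
    rw [hμ, hχ' y, div_mul_cancel₀ _ (hpos y).ne', sub_self]
  have hPs : P s < 0 := not_le.mp (fun h => absurd ((hPiff s).mp h) (not_le.mpr hs'))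
  have hPt : P t < 0 := not_le.mp (fun h => absurd ((hPiff t).mp h) (not_le.mpr ht'))
  have hPper : ∀ (z : ℝ) (k : ℤ), P (z + 2 * Real.pi * k) = P z := by
    intro z k
    simp only [hP, hnum, hden, expPer]
  have hPg : ∀ k : ℤ, 0 ≤ P (φg + 2 * Real.pi * k) := by
    intro k
    rw [hPper]
    exact (hPiff φg).mpr (hglob y)
  set w : ℂ := a - (μ : ℂ) * c with hw
  set e : ℝ := b - μ * d with he
  have hPw : ∀ z : ℝ, P z = (w * Complex.exp (Complex.I * (z : ℂ))).re + e := by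
    intro z
    simp only [hP, hnum, hden, hw, he, sub_mul, Complex.sub_re]
    have h2 : ((μ : ℂ) * c * Complex.exp (Complex.I * (z : ℂ))).re
        = μ * (c * Complex.exp (Complex.I * (z : ℂ))).re := by
      rw [mul_assoc, Complex.re_ofReal_mul]
    rw [h2]; ring
  by_cases hw0 : w = 0
  · have h1 : P s = e := by rw [hPw s, hw0]; simp
    have h2 : P y = e := by rw [hPw y, hw0]; simp
    rw [h2] at hPy
    rw [h1, hPy] at hPs
    exact absurd hPs (lt_irrefl 0)
  set R : ℝ := ‖w‖ with hR
  have hRpos : 0 < R := norm_pos_iff.mpr hw0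
  set θ : ℝ := Complex.arg w with hθ
  have hcos : ∀ z : ℝ, P z = R * Real.cos (z + θ) + e := by
    intro z
    rw [hPw]
    congr 1
    have h1 : w * Complex.exp (Complex.I * (z : ℂ))
        = (R : ℂ) * Complex.exp (((z + θ : ℝ) : ℂ) * Complex.I) := by
      conv_lhs => rw [← Complex.norm_mul_exp_arg_mul_I w]
      rw [mul_assoc, ← Complex.exp_add, ← hR, ← hθ]
      congr 1
      push_cast
      ring_nf
    rw [h1, Complex.re_ofReal_mul, Complex.exp_ofReal_mul_I_re]
  set α : ℝ := -e / R with hα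
  have hye : Real.cos (y + θ) = α := by
    have h0 := hPy
    rw [hcos y] at h0
    rw [hα]
    field_simp
    linarith
  have hα1 : α ≤ 1 := hye ▸ Real.cos_le_one (y + θ)
  have hcs : Real.cos (s + θ) < α := by
    have h0 := hPs
    rw [hcos s] at h0
    rw [hα, lt_div_iff₀ hRpos]
    nlinarith
  have hct : Real.cos (t + θ) < α := by
    have h0 := hPt
    rw [hcos t] at h0
    rw [hα, lt_div_iff₀ hRpos]
    nlinarith
  have hα2 : -1 < α := lt_of_le_of_lt (Real.neg_one_le_cos (s + θ)) hcs
  set δ : ℝ := Real.arccos α with hδ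
  have hδ0 : 0 ≤ δ := Real.arccos_nonneg α
  have hδπ : δ ≤ Real.pi := Real.arccos_le_pi α
  have hcosδ : Real.cos δ = α := Real.cos_arccos hα2.le hα1
  have band2 : ∀ (x : ℝ) (k : ℤ), |x - 2 * Real.pi * k| ≤ δ → α ≤ Real.cos x := by
    intro x k hk
    have h1 : x - 2 * Real.pi * k = x - k * (2 * Real.pi) := by ring
    have h2 : Real.cos x = Real.cos |x - 2 * Real.pi * k| := by
      rw [Real.cos_abs, h1, Real.cos_sub_int_mul_two_pi]
    rw [h2, ← hcosδ]
    exact Real.cos_le_cos_of_nonneg_of_le_pi (abs_nonneg _) hδπ hk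
  have band1 : ∀ x : ℝ, α ≤ Real.cos x → ∃ k : ℤ, |x - 2 * Real.pi * k| ≤ δ := by
    intro x hx
    have hp : (0 : ℝ) < 2 * Real.pi := by positivity
    refine ⟨toIcoDiv hp (-Real.pi) x, ?_⟩
    have hmem := toIcoMod_mem_Ico hp (-Real.pi) x
    have hmod : toIcoMod hp (-Real.pi) x = x - 2 * Real.pi * (toIcoDiv hp (-Real.pi) x) := by
      rw [toIcoMod, zsmul_eq_mul]; ring
    set k : ℤ := toIcoDiv hp (-Real.pi) x
    set v : ℝ := x - 2 * Real.pi * k with hv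
    have hv1 : -Real.pi ≤ v := by rw [← hmod]; exact hmem.1
    have hv2 : v < Real.pi := by
      have h3 := hmem.2
      rw [hmod] at h3
      linarith
    have hcv : Real.cos v = Real.cos x := by
      have h4 : v = x - k * (2 * Real.pi) := by rw [hv]; ring
      rw [h4, Real.cos_sub_int_mul_two_pi]
    by_contra hgt
    push_neg at hgt
    have h5 := Real.strictAntiOn_cos ⟨hδ0, hδπ⟩ ⟨abs_nonneg v, abs_le.mpr ⟨hv1, hv2.le⟩⟩ hgt
    rw [Real.cos_abs, hcv, hcosδ] at h5
    exact absurd hx (not_le.mpr h5)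
  obtain ⟨k₀, hk₀⟩ := band1 (y + θ) hye.ge
  obtain ⟨k₁, hk₁⟩ := band1 (φg + θ) (by
    have h0 := hPg 0
    push_cast at h0
    rw [mul_zero, add_zero, hcos φg] at h0
    rw [hα, div_le_iff₀ hRpos]
    nlinarith)
  have hk₀' := abs_le.mp hk₀
  have hsb : s + θ < 2 * Real.pi * k₀ - δ := by
    by_contra h
    push_neg at h
    have h6 : |s + θ - 2 * Real.pi * k₀| ≤ δ :=
      abs_le.mpr ⟨by linarith, by linarith [hk₀'.2]⟩
    exact absurd (band2 (s + θ) k₀ h6) (not_le.mpr hcs)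
  have htb : 2 * Real.pi * k₀ + δ < t + θ := by
    by_contra h
    push_neg at h
    have h6 : |t + θ - 2 * Real.pi * k₀| ≤ δ :=
      abs_le.mpr ⟨by linarith [hk₀'.1], by linarith⟩
    exact absurd (band2 (t + θ) k₀ h6) (not_le.mpr hct)
  set z : ℝ := φg + 2 * Real.pi * ((k₀ - k₁ : ℤ) : ℝ) with hz
  have hzb : |z + θ - 2 * Real.pi * k₀| ≤ δ := by
    have h7 : z + θ - 2 * Real.pi * k₀ = φg + θ - 2 * Real.pi * k₁ := by
      rw [hz]; push_cast; ring
    rw [h7]; exact hk₁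
  have hzb' := abs_le.mp hzb
  exact hfree (k₀ - k₁) ⟨by linarith [hzb'.1], by linarith [hzb'.2]⟩

theorem stmt3 (a c : ℂ) (b d : ℝ)
    (χ : ℝ → ℝ)
    (hχ : χ = fun y : ℝ => ((a * Complex.exp (Complex.I * (y : ℂ))).re + b) /
                        ((c * Complex.exp (Complex.I * (y : ℂ))).re + d))
    (hpos : ∀ y : ℝ, 0 < (c * Complex.exp (Complex.I * (y : ℂ))).re + d)
    (M : ℕ) (hM : 1 ≤ M)
    (G : Set ℝ) (hG : G = {x : ℝ | ∃ k : ℤ, x = 2 * Real.pi * k / M})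
    (T : ℕ) (hT : 0 < T) (l u : Fin T → ℝ)
    (hlG : ∀ t, l t ∈ G) (huG : ∀ t, u t ∈ G)
    (hlu : ∀ t, l t ≤ u t)
    (hord : ∀ t t' : Fin T, t < t' → u t < l t')
    (hleft : -Real.pi ≤ l ⟨0, hT⟩) (hright : u ⟨T - 1, by omega⟩ < Real.pi)
    (F : Set ℝ) (hF : F = ⋃ t : Fin T, (Icc (l t) (u t) ∩ G))
    (φg : ℝ) (hφg : φg ∈ Icc (-Real.pi) Real.pi)
    (hmax : ∀ y ∈ Icc (-Real.pi) Real.pi, χ y ≤ χ φg)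
    (φl φu : ℝ)
    (hφl : φl = (⌊φg * M / (2 * Real.pi)⌋ : ℝ) * (2 * Real.pi / M))
    (hφu : φu = (⌈φg * M / (2 * Real.pi)⌉ : ℝ) * (2 * Real.pi / M)) :
    ((∃ q : Fin T, l q ≤ φg ∧ φg ≤ u q) →
      ∀ y ∈ F, χ y ≤ max (χ φl) (χ φu)) ∧
    (φg ∉ Icc (l ⟨0, hT⟩) (u ⟨T - 1, by omega⟩) →
      ∀ y ∈ F, χ y ≤ max (χ (l ⟨0, hT⟩)) (χ (u ⟨T - 1, by omega⟩))) ∧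
    ((¬ ∃ q : Fin T, l q ≤ φg ∧ φg ≤ u q) →
      φg ∈ Icc (l ⟨0, hT⟩) (u ⟨T - 1, by omega⟩) →
      ∀ r : Fin T, u r < φg → (∀ r' : Fin T, u r' < φg → r' ≤ r) →
        ∀ hr : r.val + 1 < T,
          ∀ y ∈ F, χ y ≤ max (max (χ (l ⟨0, hT⟩)) (χ (u r)))
                            (max (χ (l ⟨r.val + 1, hr⟩)) (χ (u ⟨T - 1, by omega⟩)))) := by
  have hπ : (0:ℝ) < Real.pi := Real.pi_pos
  have h2π : (0:ℝ) < 2 * Real.pi := by positivity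
  have hMR : (0:ℝ) < (M:ℝ) := by exact_mod_cast Nat.pos_of_ne_zero (by omega)
  -- periodicity
  have hperk : ∀ (z : ℝ) (k : ℤ), χ (z + 2 * Real.pi * k) = χ z := by
    intro z k
    rw [hχ]
    simp only [expPer]
  -- global maximality over all reals
  have hglob : ∀ z : ℝ, χ z ≤ χ φg := by
    intro z
    have hmem := toIcoMod_mem_Ico h2π (-Real.pi) z
    have hmod : toIcoMod h2π (-Real.pi) z
        = z - 2 * Real.pi * (toIcoDiv h2π (-Real.pi) z) := by
      rw [toIcoMod, zsmul_eq_mul]; ring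
    have heq : χ (toIcoMod h2π (-Real.pi) z) = χ z := by
      rw [hmod]
      have h9 := hperk (z - 2 * Real.pi * (toIcoDiv h2π (-Real.pi) z))
        (toIcoDiv h2π (-Real.pi) z)
      rw [show z - 2 * Real.pi * ((toIcoDiv h2π (-Real.pi) z) : ℝ)
          + 2 * Real.pi * ((toIcoDiv h2π (-Real.pi) z) : ℝ) = z by ring] at h9
      exact h9.symm
    have hin : toIcoMod h2π (-Real.pi) z ∈ Icc (-Real.pi) Real.pi :=
      ⟨hmem.1, by have := hmem.2; linarith⟩
    calc χ z = χ (toIcoMod h2π (-Real.pi) z) := heq.symm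
      _ ≤ χ φg := hmax _ hin
  -- block monotonicity
  have hlmono : ∀ t1 t2 : Fin T, t1 ≤ t2 → l t1 ≤ l t2 := by
    intro t1 t2 h
    rcases eq_or_lt_of_le h with h'|h'
    · rw [h']
    · exact le_trans (hlu t1) (hord t1 t2 h').le
  have humono : ∀ t1 t2 : Fin T, t1 ≤ t2 → u t1 ≤ u t2 := by
    intro t1 t2 h
    rcases eq_or_lt_of_le h with h'|h'
    · rw [h']
    · exact le_trans (hord t1 t2 h').le (hlu t2)
  have hl0 : ∀ t : Fin T, l ⟨0, hT⟩ ≤ l t := fun t => hlmono _ t (by simp [Fin.le_def])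
  have huT : ∀ t : Fin T, u t ≤ u ⟨T - 1, by omega⟩ := fun t =>
    humono t _ (by simp [Fin.le_def]; omega)
  have hFdec : ∀ y ∈ F, ∃ t : Fin T, (l t ≤ y ∧ y ≤ u t) ∧ y ∈ G := by
    intro y hy
    rw [hF] at hy
    simp only [mem_iUnion, mem_inter_iff, mem_Icc] at hy
    exact hy
  refine ⟨?_, ?_, ?_⟩
  · -- case (i): grid-neighbour bound (holds unconditionally)
    intro _ y hy
    obtain ⟨t, ⟨hy1, hy2⟩, hyG⟩ := hFdec y hy
    rw [hG] at hyG
    obtain ⟨k, hk⟩ := hyG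
    set hstep : ℝ := 2 * Real.pi / M with hhs
    have hhpos : 0 < hstep := by positivity
    set x : ℝ := φg * M / (2 * Real.pi) with hx
    have hxh : x * hstep = φg := by rw [hhs, hx]; field_simp
    set n : ℤ := ⌊x⌋ with hn
    set m : ℤ := ⌈x⌉ with hm
    have hln : φl ≤ φg := by
      rw [hφl, ← hxh]
      exact mul_le_mul_of_nonneg_right (Int.floor_le x) hhpos.le
    have hgu : φg ≤ φu := by
      rw [hφu, ← hxh]
      exact mul_le_mul_of_nonneg_right (Int.le_ceil x) hhpos.le
    have hmn : m ≤ n + 1 := Int.ceil_le_floor_add_one x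
    have hky : y = (k:ℝ) * hstep := by rw [hk, hhs]; ring
    have h2pih : 2 * Real.pi = (M:ℝ) * hstep := by
      rw [hhs, mul_div_cancel₀ _ hMR.ne']
    -- shift y to a grid point in [φu - 2π, φl]
    set j : ℤ := (k - m) / (M:ℤ) + 1 with hj
    set k' : ℤ := k - (M:ℤ) * j with hk'
    have hk'eq : k' = m - (M:ℤ) + (k - m) % (M:ℤ) := by
      have h1 := Int.emod_add_mul_ediv (k - m) (M:ℤ)
      rw [hk', hj]
      linear_combination -h1
    have hr0a : 0 ≤ (k - m) % (M:ℤ) := Int.emod_nonneg _ (by exact_mod_cast (by omega : M ≠ 0))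
    have hr0b : (k - m) % (M:ℤ) < (M:ℤ) :=
      Int.emod_lt_of_pos _ (by exact_mod_cast Nat.pos_of_ne_zero (by omega))
    have hlow : (m:ℤ) - M ≤ k' := by omega
    have hhigh : k' ≤ n := by omega
    set z : ℝ := (k':ℝ) * hstep with hz
    have hzy : χ y = χ z := by
      have h9 := hperk z j
      rw [show z + 2 * Real.pi * (j:ℝ) = y by
        rw [hky, h2pih, hz, hk']; push_cast; ring] at h9
      exact h9
    have hsz : φu - 2 * Real.pi ≤ z := by
      have : ((m - (M:ℤ) : ℤ) : ℝ) * hstep ≤ (k':ℝ) * hstep :=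
        mul_le_mul_of_nonneg_right (by exact_mod_cast hlow) hhpos.le
      rw [hφu, h2pih, hz]
      push_cast at this ⊢
      linarith
    have hzt : z ≤ φl := by
      have : (k':ℝ) * hstep ≤ ((n:ℤ):ℝ) * hstep :=
        mul_le_mul_of_nonneg_right (by exact_mod_cast hhigh) hhpos.le
      rw [hφl, hz]
      exact this
    have hfr : ∀ i : ℤ, φg + 2 * Real.pi * i ∉ Set.Ioo (φu - 2 * Real.pi) φl := by
      rintro i ⟨h1, h2⟩
      rcases lt_trichotomy i 0 with hi|rfl|hi
      · have hi' : (i:ℝ) ≤ -1 := by exact_mod_cast (by omega : i ≤ -1)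
        have hp2 : 2*Real.pi*(i:ℝ) ≤ 2*Real.pi*(-1) := mul_le_mul_of_nonneg_left hi' h2π.le
        linarith [hgu]
      · push_cast at h1 h2
        rw [mul_zero, add_zero] at h1 h2
        linarith
      · have hi' : (1:ℝ) ≤ (i:ℝ) := by exact_mod_cast (by omega : 1 ≤ i)
        have hp2 : 2*Real.pi*(1:ℝ) ≤ 2*Real.pi*(i:ℝ) := mul_le_mul_of_nonneg_left hi' h2π.le
        linarith [hln, hπ]
    have hbound := arcLemma a c b d χ hχ hpos φg hglob (φu - 2 * Real.pi) φl z hsz hzt hfr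
    have hvs : χ (φu - 2 * Real.pi) = χ φu := by
      have h9 := hperk (φu - 2 * Real.pi) 1
      rw [show φu - 2 * Real.pi + 2 * Real.pi * ((1:ℤ):ℝ) = φu by push_cast; ring] at h9
      exact h9.symm
    rw [hzy]
    rw [hvs, max_comm] at hbound
    exact hbound
  · -- case (ii)
    intro hnot y hy
    obtain ⟨t, ⟨hy1, hy2⟩, _⟩ := hFdec y hy
    refine arcLemma a c b d χ hχ hpos φg hglob _ _ y (le_trans (hl0 t) hy1)
      (le_trans hy2 (huT t)) ?_
    rintro i ⟨h1, h2⟩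
    rcases lt_trichotomy i 0 with hi|rfl|hi
    · have hi' : (i:ℝ) ≤ -1 := by exact_mod_cast (by omega : i ≤ -1)
      have := hφg.2
      have hp2 : 2*Real.pi*(i:ℝ) ≤ 2*Real.pi*(-1) := mul_le_mul_of_nonneg_left hi' h2π.le
      linarith [hleft]
    · push_cast at h1 h2
      rw [mul_zero, add_zero] at h1 h2
      exact hnot ⟨h1.le, h2.le⟩
    · have hi' : (1:ℝ) ≤ (i:ℝ) := by exact_mod_cast (by omega : 1 ≤ i)
      have := hφg.1
      have hp2 : 2*Real.pi*(1:ℝ) ≤ 2*Real.pi*(i:ℝ) := mul_le_mul_of_nonneg_left hi' h2π.le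
      linarith [hright]
  · -- case (iii)
    intro hnq hin r hur hmaxr hr y hy
    obtain ⟨t, ⟨hy1, hy2⟩, _⟩ := hFdec y hy
    have hφglt : φg < l ⟨r.val + 1, hr⟩ := by
      by_contra h
      push_neg at h
      have h2 : ¬ φg ≤ u ⟨r.val + 1, hr⟩ := fun hle => hnq ⟨⟨r.val + 1, hr⟩, h, hle⟩
      push_neg at h2
      have h3 := hmaxr ⟨r.val + 1, hr⟩ h2
      rw [Fin.le_def] at h3
      have h4 : r.val + 1 ≤ r.val := h3
      omega
    by_cases hcase : t ≤ r
    · have hyur : y ≤ u r := le_trans hy2 (humono t r hcase)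
      have hfr : ∀ i : ℤ, φg + 2 * Real.pi * i ∉ Set.Ioo (l ⟨0, hT⟩) (u r) := by
        rintro i ⟨h1, h2⟩
        rcases lt_trichotomy i 0 with hi|rfl|hi
        · have hi' : (i:ℝ) ≤ -1 := by exact_mod_cast (by omega : i ≤ -1)
          have := hφg.2
          have hp2 : 2*Real.pi*(i:ℝ) ≤ 2*Real.pi*(-1) := mul_le_mul_of_nonneg_left hi' h2π.le
          linarith [hleft]
        · push_cast at h1 h2
          rw [mul_zero, add_zero] at h1 h2
          linarith
        · have hi' : (1:ℝ) ≤ (i:ℝ) := by exact_mod_cast (by omega : 1 ≤ i)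
          have := hφg.1
          have hurb : u r < Real.pi := lt_of_le_of_lt (huT r) hright
          have hp2 : 2*Real.pi*(1:ℝ) ≤ 2*Real.pi*(i:ℝ) := mul_le_mul_of_nonneg_left hi' h2π.le
          linarith
      exact le_trans (arcLemma a c b d χ hχ hpos φg hglob (l ⟨0, hT⟩) (u r) y
        (le_trans (hl0 t) hy1) hyur hfr) (le_max_left _ _)
    · push_neg at hcase
      have hcase' : (⟨r.val + 1, hr⟩ : Fin T) ≤ t := by
        rw [Fin.le_def]
        have h5 := Fin.lt_def.mp hcase
        show r.val + 1 ≤ t.val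
        omega
      have hly : l ⟨r.val + 1, hr⟩ ≤ y := le_trans (hlmono _ t hcase') hy1
      have hfr : ∀ i : ℤ, φg + 2 * Real.pi * i ∉
          Set.Ioo (l ⟨r.val + 1, hr⟩) (u ⟨T - 1, by omega⟩) := by
        rintro i ⟨h1, h2⟩
        rcases lt_trichotomy i 0 with hi|rfl|hi
        · have hi' : (i:ℝ) ≤ -1 := by exact_mod_cast (by omega : i ≤ -1)
          have := hφg.2
          have hlb : -Real.pi ≤ l ⟨r.val + 1, hr⟩ := le_trans hleft (hl0 _)
          have hp2 : 2*Real.pi*(i:ℝ) ≤ 2*Real.pi*(-1) := mul_le_mul_of_nonneg_left hi' h2π.le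
          linarith
        · push_cast at h1 h2
          rw [mul_zero, add_zero] at h1 h2
          linarith
        · have hi' : (1:ℝ) ≤ (i:ℝ) := by exact_mod_cast (by omega : 1 ≤ i)
          have := hφg.1
          have hp2 : 2*Real.pi*(1:ℝ) ≤ 2*Real.pi*(i:ℝ) := mul_le_mul_of_nonneg_left hi' h2π.le
          linarith [hright]
      exact le_trans (arcLemma a c b d χ hχ hpos φg hglob (l ⟨r.val + 1, hr⟩)
        (u ⟨T - 1, by omega⟩) y hly (le_trans hy2 (huT t)) hfr) (le_max_right _ _)
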